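/- The sign of u_G'(λ) equals the sign of h(ψ) = −(1−k)α²(u_H − p)ψ² + (u_H − u_L − 4(1−k)(u_H − p))δαψ − 2(1−k)δ²(u_H + u_L − 2p), evaluated at ψ = λ^k, for λ > 0, where k ∈ (0,1), δ, α > 0, u_H > p, and u_H > u_L. -/

import Mathlib

lemma sign_pos_mul (c x : ℝ) (hc : 0 < c) : Real.sign (c * x) = Real.sign x := by
  rcases lt_trichotomy x 0 with h | h | h
  · rw [Real.sign_of_neg h, Real.sign_of_neg (mul_neg_of_pos_of_neg hc h)]
  · simp [h]
  · rw [Real.sign_of_pos h, Real.sign_of_pos (mul_pos hc h)]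

theorem uG_deriv_sign (k δ α uH uL p : ℝ)
    (hk : k ∈ Set.Ioo (0:ℝ) 1) (hδ : 0 < δ) (hα : 0 < α)
    (hHp : uH > p) (hu : uH > uL) :
    ∀ lam : ℝ, 0 < lam →
      Real.sign
        (deriv (fun x : ℝ => x ^ (k - 1) * (uH - p - (uH - uL) * δ / (2 * δ + x ^ k * α))) lam)
      = Real.sign
        (-(1 - k) * α ^ 2 * (uH - p) * (lam ^ k) ^ 2
          + (uH - uL - 4 * (1 - k) * (uH - p)) * δ * α * lam ^ k
          - 2 * (1 - k) * δ ^ 2 * (uH + uL - 2 * p)) := by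
  intro lam hlam
  have hψ : (0:ℝ) < lam ^ k := Real.rpow_pos_of_pos hlam k
  have hD : (0:ℝ) < 2 * δ + lam ^ k * α := by positivity
  have hd1 : HasDerivAt (fun x : ℝ => x ^ (k - 1)) ((k - 1) * lam ^ (k - 1 - 1)) lam :=
    Real.hasDerivAt_rpow_const (Or.inl hlam.ne')
  have hd2 : HasDerivAt (fun x : ℝ => x ^ k) (k * lam ^ (k - 1)) lam :=
    Real.hasDerivAt_rpow_const (Or.inl hlam.ne')
  have hden : HasDerivAt (fun x : ℝ => 2 * δ + x ^ k * α) (k * lam ^ (k - 1) * α) lam :=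
    (hd2.mul_const α).const_add (2 * δ)
  have hdiv : HasDerivAt (fun x : ℝ => (uH - uL) * δ / (2 * δ + x ^ k * α))
      ((0 * (2 * δ + lam ^ k * α) - (uH - uL) * δ * (k * lam ^ (k - 1) * α)) /
        (2 * δ + lam ^ k * α) ^ 2) lam :=
    (hasDerivAt_const lam ((uH - uL) * δ)).div hden hD.ne'
  have hsub : HasDerivAt (fun x : ℝ => uH - p - (uH - uL) * δ / (2 * δ + x ^ k * α))
      (-((0 * (2 * δ + lam ^ k * α) - (uH - uL) * δ * (k * lam ^ (k - 1) * α)) /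
        (2 * δ + lam ^ k * α) ^ 2)) lam := hdiv.const_sub (uH - p)
  have hmul : HasDerivAt (fun x : ℝ => x ^ (k - 1) * (uH - p - (uH - uL) * δ / (2 * δ + x ^ k * α))) _ lam := hd1.mul hsub
  rw [hmul.deriv]
  have ht : (0:ℝ) < lam ^ (k - 2) := Real.rpow_pos_of_pos hlam _
  have e0 : lam ^ (k - 1 - 1) = lam ^ (k - 2) := by ring_nf
  have e1 : lam ^ (k - 1) = lam ^ (k - 2) * lam := by
    rw [show k - 1 = k - 2 + 1 by ring, Real.rpow_add hlam, Real.rpow_one]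
  have e2 : lam ^ k = lam ^ (k - 2) * lam * lam := by
    nth_rewrite 1 [show k = k - 2 + 1 + 1 by ring]
    rw [Real.rpow_add hlam, Real.rpow_add hlam, Real.rpow_one]
  have key : (k - 1) * lam ^ (k - 1 - 1) *
        (uH - p - (uH - uL) * δ / (2 * δ + lam ^ k * α)) +
      lam ^ (k - 1) *
        -((0 * (2 * δ + lam ^ k * α) - (uH - uL) * δ * (k * lam ^ (k - 1) * α)) /
          (2 * δ + lam ^ k * α) ^ 2)
      = (lam ^ (k - 2) / (2 * δ + lam ^ k * α) ^ 2) *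
        (-(1 - k) * α ^ 2 * (uH - p) * (lam ^ k) ^ 2
          + (uH - uL - 4 * (1 - k) * (uH - p)) * δ * α * lam ^ k
          - 2 * (1 - k) * δ ^ 2 * (uH + uL - 2 * p)) := by
    have hDne : (2 * δ + lam ^ (k - 2) * lam * lam * α) ≠ 0 := by rw [← e2]; exact hD.ne'
    rw [e0, e1, e2]
    field_simp
    ring
  rw [key]
  exact sign_pos_mul _ _ (div_pos ht (pow_pos hD 2))
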